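/- For every Hermitian matrix H ∈ GL_m(𝔽_{q²}) and every nonsquare ζ ∈ 𝔽_q^×, the discriminant of the 2m-dimensional 𝔽_q-quadratic form Q_H lies in the square class (−ζ)^m·(𝔽_q^×)²: for any 𝔽_q-basis e_1,…,e_{2m} of 𝔽_{q²}^m, the determinant of the Gram matrix (B(e_i,e_j))_{i,j}, where B(x,y) = (1/2)(Q_H(x+y) − Q_H(x) − Q_H(y)) is the polarization of Q_H, equals (−ζ)^m·c² for some c ∈ 𝔽_q^×. -/

import Mathlib

open Matrix Polynomial

lemma fixed_field_surj (F K : Type) [Field F] [Fintype F] [Field K] [Algebra F K]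
    [DecidableEq K] (x : K) (hx : x ^ Fintype.card F = x) :
    ∃ a : F, algebraMap F K a = x := by
  by_contra h
  push_neg at h
  have hq2 : 2 ≤ Fintype.card F := Fintype.one_lt_card
  set P : K[X] := X ^ Fintype.card F - X with hP
  have hPne : P ≠ 0 := by
    intro h0
    have : P.coeff (Fintype.card F) = 0 := by rw [h0]; simp
    rw [hP, coeff_sub, coeff_X_pow, coeff_X, if_pos rfl,
      if_neg (by omega : (1:ℕ) ≠ Fintype.card F)] at this
    simp at this
  have hdeg : P.natDegree ≤ Fintype.card F := by
    refine le_trans (natDegree_sub_le _ _) ?_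
    simp [natDegree_X_pow]
    omega
  have hroot : ∀ y ∈ insert x (Finset.univ.image (algebraMap F K)), P.IsRoot y := by
    intro y hy
    rcases Finset.mem_insert.mp hy with rfl | hy
    · simp [hP, IsRoot, hx]
    · obtain ⟨a, -, rfl⟩ := Finset.mem_image.mp hy
      have : (algebraMap F K a) ^ Fintype.card F = algebraMap F K a := by
        rw [← map_pow, FiniteField.pow_card]
      simp [hP, IsRoot, this]
  have hsub : insert x (Finset.univ.image (algebraMap F K)) ⊆ P.roots.toFinset := by
    intro y hy
    rw [Multiset.mem_toFinset, mem_roots hPne]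
    exact hroot y hy
  have hcard1 : (insert x (Finset.univ.image (algebraMap F K))).card = Fintype.card F + 1 := by
    rw [Finset.card_insert_of_notMem (by
      intro hmem
      obtain ⟨a, -, ha⟩ := Finset.mem_image.mp hmem
      exact h a ha)]
    rw [Finset.card_image_of_injective _ (algebraMap F K).injective, Finset.card_univ]
  have := Finset.card_le_card hsub
  have h2 := Multiset.toFinset_card_le P.roots
  have h3 := P.card_roots'
  omega


noncomputable def gaux {K : Type} [Field K] (q m : ℕ) (H : Matrix (Fin m) (Fin m) K)
    (x y : Fin m → K) : K :=
  ∑ j : Fin m, ∑ k : Fin m, (x j) ^ q * H j k * y k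

theorem discriminant_hermitian_form_square_class
    (F K : Type) [Field F] [Fintype F] [Field K] [Fintype K] [Algebra F K]
    (hodd : Odd (Fintype.card F))
    (hcard : Fintype.card K = Fintype.card F ^ 2)
    (m : ℕ)
    (H : Matrix (Fin m) (Fin m) K) (hH : IsUnit H)
    (hHerm : (H.map fun a => a ^ Fintype.card F)ᵀ = H)
    (ζ : F) (hζ : ¬ IsSquare ζ)
    (B : (Fin m → K) → (Fin m → K) → F)
    (hB : ∀ x y : Fin m → K,
      2 * algebraMap F K (B x y) =
        (∑ j : Fin m, ∑ k : Fin m, ((x + y) j) ^ Fintype.card F * H j k * (x + y) k)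
        - (∑ j : Fin m, ∑ k : Fin m, (x j) ^ Fintype.card F * H j k * x k)
        - (∑ j : Fin m, ∑ k : Fin m, (y j) ^ Fintype.card F * H j k * y k))
    (b : Module.Basis (Fin (2 * m)) F (Fin m → K)) :
    ∃ c : F, c ≠ 0 ∧
      (Matrix.of fun i j => B (b i) (b j)).det = (-ζ) ^ m * c ^ 2 := by
  classical
  have hq2 : 2 ≤ Fintype.card F := Fintype.one_lt_card
  -- characteristic setup
  haveI hpF : CharP F (ringChar F) := ringChar.charP F
  set p := ringChar F with hpdef
  have hpprime : p.Prime := CharP.char_is_prime F p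
  haveI : Fact p.Prime := ⟨hpprime⟩
  obtain ⟨n, hqn⟩ := FiniteField.card F p
  have hqn : Fintype.card F = p ^ (n:ℕ) := hqn.2
  haveI hpK : CharP K p := charP_of_injective_algebraMap (algebraMap F K).injective p
  have hp2 : p ≠ 2 := by
    intro hp2
    rw [hqn, hp2] at hodd
    rcases hodd with ⟨t, ht⟩
    obtain ⟨k, hk⟩ : 2 ∣ 2 ^ (n:ℕ) := dvd_pow_self 2 n.ne_zero
    omega
  have h2F : (2:F) ≠ 0 := by
    intro h0
    have h2 : ((2:ℕ):F) = 0 := by exact_mod_cast h0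
    exact hp2 ((Nat.prime_dvd_prime_iff_eq hpprime Nat.prime_two).mp
      ((CharP.cast_eq_zero_iff F p 2).mp h2))
  have h2K : (2:K) ≠ 0 := by
    intro h0
    have h2 : ((2:ℕ):K) = 0 := by exact_mod_cast h0
    exact hp2 ((Nat.prime_dvd_prime_iff_eq hpprime Nat.prime_two).mp
      ((CharP.cast_eq_zero_iff K p 2).mp h2))
  have halg_inj : Function.Injective (algebraMap F K) := (algebraMap F K).injective
  -- Frobenius facts
  have hfrob : ∀ x y : K, (x + y) ^ Fintype.card F = x ^ Fintype.card F + y ^ Fintype.card F := by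
    intro x y
    rw [hqn]
    exact add_pow_char_pow x y p n
  have halgq : ∀ a : F, (algebraMap F K a) ^ Fintype.card F = algebraMap F K a := by
    intro a
    rw [← map_pow, FiniteField.pow_card]
  have hKqq : ∀ x : K, (x ^ Fintype.card F) ^ Fintype.card F = x := by
    intro x
    rw [← pow_mul, ← sq, ← hcard]
    exact FiniteField.pow_card x
  have hfix : ∀ x : K, x ^ Fintype.card F = x → ∃ a : F, algebraMap F K a = x := fun x hx =>
    fixed_field_surj F K x hx
  have hHq : ∀ j k, H j k ^ Fintype.card F = H k j := by
    intro j k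
    have := congrFun (congrFun hHerm k) j
    simpa [Matrix.transpose_apply, Matrix.map_apply] using this
  -- theta
  have hζ0 : ζ ≠ 0 := fun h0 => hζ ⟨0, by rw [h0]; ring⟩
  have hζK0 : algebraMap F K ζ ≠ 0 := fun h0 => hζ0 (halg_inj (by simpa using h0))
  have hcharK2 : ringChar K ≠ 2 := by
    rw [ringChar.eq K p]; exact hp2
  have hsqK : IsSquare (algebraMap F K ζ) := by
    rw [FiniteField.isSquare_iff hcharK2 hζK0]
    obtain ⟨t, ht⟩ := hodd
    have harith : Fintype.card K / 2 = (Fintype.card F - 1) * ((Fintype.card F + 1) / 2) := by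
      rw [hcard, ht]
      have h1 : (2 * t + 1) ^ 2 = 2 * (2 * t ^ 2 + 2 * t) + 1 := by ring
      have h2 : (2 * t + 1 - 1) * ((2 * t + 1 + 1) / 2) = 2 * t ^ 2 + 2 * t := by
        have h3 : (2 * t + 1 + 1) / 2 = t + 1 := by omega
        have h4 : 2 * t + 1 - 1 = 2 * t := by omega
        rw [h3, h4]; ring
      rw [h1, h2, Nat.mul_add_div two_pos]
      simp
    rw [harith, pow_mul, ← map_pow]
    have h4 : ζ ^ (Fintype.card F - 1) = 1 := FiniteField.pow_card_sub_one_eq_one ζ hζ0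
    rw [h4, _root_.map_one, one_pow]
  obtain ⟨θ, hθ⟩ := hsqK
  have hθ2 : θ * θ = algebraMap F K ζ := hθ.symm
  have hθ0 : θ ≠ 0 := by
    intro h0
    rw [h0, mul_zero] at hθ2
    exact hζK0 hθ2.symm
  have hθnotF : ∀ a : F, algebraMap F K a ≠ θ := by
    intro a ha
    refine hζ ⟨a, halg_inj ?_⟩
    rw [_root_.map_mul, ha, hθ2]
  have hθq : θ ^ Fintype.card F = -θ := by
    have hsq : (θ ^ Fintype.card F - θ) * (θ ^ Fintype.card F + θ) = 0 := by
      have h5 : (θ * θ) ^ Fintype.card F = θ * θ := by rw [hθ2, halgq]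
      have h' : θ ^ Fintype.card F * θ ^ Fintype.card F = θ * θ := by rw [← mul_pow, h5]
      linear_combination h'
    rcases mul_eq_zero.mp hsq with h1 | h1
    · exfalso
      have h6 : θ ^ Fintype.card F = θ := by linear_combination h1
      obtain ⟨a, ha⟩ := hfix θ h6
      exact hθnotF a ha
    · linear_combination h1
  -- Frobenius as ring hom
  haveI : ExpChar K p := ExpChar.prime hpprime
  set ψ : K →+* K := iterateFrobenius K p n with hψdef
  have hψ : ∀ x : K, ψ x = x ^ Fintype.card F := by
    intro x
    rw [hψdef, iterateFrobenius_def, ← hqn]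
  -- the sesquilinear companion g
  have hBg : ∀ x y : Fin m → K, 2 * algebraMap F K (B x y) =
      gaux (Fintype.card F) m H x y + gaux (Fintype.card F) m H y x := by
    intro x y
    rw [hB x y]
    have hexp : ∀ j k : Fin m, ((x + y) j) ^ Fintype.card F * H j k * ((x + y) k) =
        (x j) ^ Fintype.card F * H j k * x k + (x j) ^ Fintype.card F * H j k * y k
        + (y j) ^ Fintype.card F * H j k * x k + (y j) ^ Fintype.card F * H j k * y k := by
      intro j k
      simp only [Pi.add_apply, hfrob]
      ring
    simp only [hexp, Finset.sum_add_distrib, gaux]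
    ring
  have hcancel : ∀ u v : F, 2 * algebraMap F K u = 2 * algebraMap F K v → u = v := by
    intro u v h
    exact halg_inj (mul_left_cancel₀ h2K h)
  have hgadd1 : ∀ x x' y : Fin m → K, gaux (Fintype.card F) m H (x + x') y =
      gaux (Fintype.card F) m H x y + gaux (Fintype.card F) m H x' y := by
    intro x x' y
    simp only [gaux, Pi.add_apply, hfrob, add_mul, Finset.sum_add_distrib]
  have hgadd2 : ∀ x y y' : Fin m → K, gaux (Fintype.card F) m H x (y + y') =
      gaux (Fintype.card F) m H x y + gaux (Fintype.card F) m H x y' := by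
    intro x y y'
    simp only [gaux, Pi.add_apply, mul_add, Finset.sum_add_distrib]
  have hgsmul1 : ∀ (c : F) (x y : Fin m → K), gaux (Fintype.card F) m H (c • x) y =
      algebraMap F K c * gaux (Fintype.card F) m H x y := by
    intro c x y
    simp only [gaux, Pi.smul_apply, Algebra.smul_def, mul_pow, halgq, Finset.mul_sum]
    exact Finset.sum_congr rfl fun j _ => Finset.sum_congr rfl fun k _ => by ring
  have hgsmul2 : ∀ (c : F) (x y : Fin m → K), gaux (Fintype.card F) m H x (c • y) =
      algebraMap F K c * gaux (Fintype.card F) m H x y := by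
    intro c x y
    simp only [gaux, Pi.smul_apply, Algebra.smul_def, Finset.mul_sum]
    exact Finset.sum_congr rfl fun j _ => Finset.sum_congr rfl fun k _ => by ring
  have hgswap : ∀ x y : Fin m → K,
      (gaux (Fintype.card F) m H x y) ^ Fintype.card F = gaux (Fintype.card F) m H y x := by
    intro x y
    have : (gaux (Fintype.card F) m H x y) ^ Fintype.card F
        = ∑ j : Fin m, ∑ k : Fin m, x j * H k j * (y k) ^ Fintype.card F := by
      rw [← hψ, gaux, map_sum]
      refine Finset.sum_congr rfl fun j _ => ?_
      rw [map_sum]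
      refine Finset.sum_congr rfl fun k _ => ?_
      rw [_root_.map_mul, _root_.map_mul, hψ, hψ, hψ, hKqq, hHq]
    rw [this, Finset.sum_comm, gaux]
    exact Finset.sum_congr rfl fun k _ => Finset.sum_congr rfl fun j _ => by ring
  have hBsym : ∀ x y : Fin m → K, B x y = B y x := by
    intro x y
    apply hcancel
    rw [hBg, hBg]
    ring
  have hBaddl : ∀ x x' y : Fin m → K, B (x + x') y = B x y + B x' y := by
    intro x x' y
    apply hcancel
    rw [hBg, hgadd1, hgadd2, map_add, mul_add]
    linear_combination -hBg x y - hBg x' y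
  have hBsmull : ∀ (c : F) (x y : Fin m → K), B (c • x) y = c * B x y := by
    intro c x y
    apply hcancel
    rw [hBg, hgsmul1, hgsmul2, _root_.map_mul]
    linear_combination -(algebraMap F K c) * hBg x y
  have hBaddr : ∀ x y y' : Fin m → K, B x (y + y') = B x y + B x y' := by
    intro x y y'
    rw [hBsym, hBaddl, hBsym y x, hBsym y' x]
  have hBsmulr : ∀ (c : F) (x y : Fin m → K), B x (c • y) = c * B x y := by
    intro c x y
    rw [hBsym, hBsmull, hBsym y x]
  set Bform : LinearMap.BilinForm F (Fin m → K) :=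
    LinearMap.mk₂ F B hBaddl (fun c x y => by rw [smul_eq_mul, ← hBsmull])
      hBaddr (fun c x y => by rw [smul_eq_mul, ← hBsmulr]) with hBformdef
  have hBform : ∀ x y, Bform x y = B x y := fun x y => rfl
  -- finrank
  have hfr : Module.finrank F K = 2 := by
    have h := Module.card_eq_pow_finrank (K := F) (V := K)
    rw [hcard] at h
    exact (Nat.pow_right_injective hq2 h.symm)
  -- basis {1, θ} of K over F
  have hli : LinearIndependent F ![(1 : K), θ] := by
    rw [LinearIndependent.pair_iff]
    intro s t hst
    by_cases ht : t = 0
    · subst ht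
      simp only [zero_smul, add_zero] at hst
      constructor
      · have : algebraMap F K s = 0 := by
          rw [Algebra.algebraMap_eq_smul_one]
          simpa using hst
        exact halg_inj (by simpa using this)
      · rfl
    · exfalso
      apply hθnotF (-(s / t))
      have hs : algebraMap F K s + algebraMap F K t * θ = 0 := by
        rw [Algebra.algebraMap_eq_smul_one, Algebra.algebraMap_eq_smul_one]
        calc s • (1:K) + t • (1:K) * θ = s • (1:K) + t • θ := by rw [smul_mul_assoc, one_mul]
        _ = 0 := hst
      have htK : algebraMap F K t ≠ 0 := fun h0 => ht (halg_inj (by simpa using h0))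
      rw [map_neg, map_div₀, neg_eq_iff_eq_neg, div_eq_iff htK]
      linear_combination hs
  have hbne : Nonempty (Fin 2) := ⟨0⟩
  set bK : Module.Basis (Fin 2) F K :=
    basisOfLinearIndependentOfCardEqFinrank hli (by simp [hfr]) with hbKdef
  have hbK : ⇑bK = ![(1:K), θ] := coe_basisOfLinearIndependentOfCardEqFinrank hli _
  have hbK0 : bK 0 = 1 := by rw [hbK]; rfl
  have hbK1 : bK 1 = θ := by rw [hbK]; rfl
  -- basis of (Fin m → K) over F
  set pb : Module.Basis (Fin m) K (Fin m → K) := Pi.basisFun K (Fin m) with hpbdef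
  set e2 : (Fin m ⊕ Fin m) ≃ (Fin 2 × Fin m) :=
    { toFun := Sum.elim (fun j => ((0 : Fin 2), j)) (fun j => ((1 : Fin 2), j))
      invFun := fun x => if x.1 = 0 then Sum.inl x.2 else Sum.inr x.2
      left_inv := by rintro (j | j) <;> simp
      right_inv := by
        rintro ⟨c, j⟩
        fin_cases c <;> simp } with he2def
  set b₀ : Module.Basis (Fin m ⊕ Fin m) F (Fin m → K) := (bK.smulTower pb).reindex e2.symm with hb₀def
  have hb₀l : ∀ j : Fin m, b₀ (Sum.inl j) = pb j := by
    intro j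
    rw [hb₀def, Module.Basis.reindex_apply, Equiv.symm_symm, he2def]
    show (bK.smulTower pb) ((0 : Fin 2), j) = pb j
    rw [Module.Basis.smulTower_apply, hbK0, one_smul]
  have hb₀r : ∀ j : Fin m, b₀ (Sum.inr j) = θ • pb j := by
    intro j
    rw [hb₀def, Module.Basis.reindex_apply, Equiv.symm_symm, he2def]
    show (bK.smulTower pb) ((1 : Fin 2), j) = θ • pb j
    rw [Module.Basis.smulTower_apply, hbK1]
  have hq0 : Fintype.card F ≠ 0 := by omega
  have hpb : ∀ (j l : Fin m), pb j l = if l = j then 1 else 0 := by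
    intro j l
    rw [hpbdef]
    simp [Pi.basisFun_apply, Pi.single_apply]
  have hgval : ∀ (α β : K) (j k : Fin m),
      gaux (Fintype.card F) m H (α • pb j) (β • pb k) = α ^ Fintype.card F * H j k * β := by
    intro α β j k
    have h1 : ∀ l k' : Fin m, ((α • pb j) l) ^ Fintype.card F * H l k' * ((β • pb k) k')
        = (if l = j then α ^ Fintype.card F else 0) * H l k' * (if k' = k then β else 0) := by
      intro l k'
      simp only [Pi.smul_apply, smul_eq_mul, hpb, mul_ite, mul_one, mul_zero]
      split_ifs <;> simp [zero_pow hq0]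
    simp only [gaux, h1]
    simp [Finset.sum_ite_eq', mul_ite, ite_mul, zero_mul, mul_zero, Finset.sum_ite_eq]
  have hg11 : ∀ i j : Fin m, gaux (Fintype.card F) m H (pb i) (pb j) = H i j := by
    intro i j
    have h := hgval 1 1 i j
    simpa using h
  have hg1θ : ∀ i j : Fin m, gaux (Fintype.card F) m H (pb i) (θ • pb j) = H i j * θ := by
    intro i j
    have h := hgval 1 θ i j
    simpa using h
  have hgθ1 : ∀ i j : Fin m, gaux (Fintype.card F) m H (θ • pb i) (pb j) = -θ * H i j := by
    intro i j
    have h := hgval θ 1 i j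
    rw [hθq] at h
    simpa using h
  have hgθθ : ∀ i j : Fin m, gaux (Fintype.card F) m H (θ • pb i) (θ • pb j)
      = -θ * H i j * θ := by
    intro i j
    have h := hgval θ θ i j
    rw [hθq] at h
    simpa using h
  set Dm : Matrix (Fin m ⊕ Fin m) (Fin m ⊕ Fin m) K := fromBlocks Hᵀ 0 0 H with hDmdef
  set Mm : Matrix (Fin m ⊕ Fin m) (Fin m ⊕ Fin m) K :=
    fromBlocks 1 (θ • 1) 1 (-θ • 1) with hMmdef
  set Nm : Matrix (Fin m ⊕ Fin m) (Fin m ⊕ Fin m) K :=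
    fromBlocks 1 (-θ • 1) 1 (θ • 1) with hNmdef
  set G₀ : Matrix (Fin m ⊕ Fin m) (Fin m ⊕ Fin m) F := LinearMap.BilinForm.toMatrix b₀ Bform with hG₀def
  have hRHS : Mmᵀ * Dm * Nm = fromBlocks (Hᵀ + H) (θ • H - θ • Hᵀ) (θ • Hᵀ - θ • H)
      (-((θ * θ) • (Hᵀ + H))) := by
    rw [hMmdef, hDmdef, hNmdef, fromBlocks_transpose, fromBlocks_multiply, fromBlocks_multiply]
    simp only [Matrix.transpose_one, Matrix.transpose_smul, Matrix.one_mul, Matrix.mul_one,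
      Matrix.mul_zero, Matrix.zero_mul, Matrix.smul_mul, Matrix.mul_smul, add_zero, zero_add,
      smul_smul, neg_smul, smul_neg, neg_neg, neg_mul, mul_neg]
    ext i j
    rcases i with i | i <;> rcases j with j | j <;>
      simp [Matrix.fromBlocks_apply₁₁, Matrix.fromBlocks_apply₁₂, Matrix.fromBlocks_apply₂₁,
        Matrix.fromBlocks_apply₂₂, Matrix.add_apply, Matrix.sub_apply, Matrix.smul_apply,
        Matrix.neg_apply, smul_eq_mul] <;> ring
  have hentry : ∀ i j, ((2:K) • (G₀.map (algebraMap F K))) i j =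
      (fromBlocks (Hᵀ + H) (θ • H - θ • Hᵀ) (θ • Hᵀ - θ • H) (-((θ * θ) • (Hᵀ + H)))) i j := by
    intro i j
    rw [Matrix.smul_apply, Matrix.map_apply, hG₀def, BilinForm.toMatrix_apply, smul_eq_mul]
    rcases i with i | i <;> rcases j with j | j
    · rw [show Bform (b₀ (Sum.inl i)) (b₀ (Sum.inl j)) = B (pb i) (pb j) by
        rw [hb₀l, hb₀l]; rfl]
      rw [hBg, hg11, hg11]
      simp [Matrix.fromBlocks_apply₁₁, Matrix.add_apply, Matrix.transpose_apply]
      ring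
    · rw [show Bform (b₀ (Sum.inl i)) (b₀ (Sum.inr j)) = B (pb i) (θ • pb j) by
        rw [hb₀l, hb₀r]; rfl]
      rw [hBg, hg1θ, hgθ1]
      simp [Matrix.fromBlocks_apply₁₂, Matrix.sub_apply, Matrix.smul_apply,
        Matrix.transpose_apply, smul_eq_mul]
      ring
    · rw [show Bform (b₀ (Sum.inr i)) (b₀ (Sum.inl j)) = B (θ • pb i) (pb j) by
        rw [hb₀l, hb₀r]; rfl]
      rw [hBg, hg1θ, hgθ1]
      simp [Matrix.fromBlocks_apply₂₁, Matrix.sub_apply, Matrix.smul_apply,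
        Matrix.transpose_apply, smul_eq_mul]
      ring
    · rw [show Bform (b₀ (Sum.inr i)) (b₀ (Sum.inr j)) = B (θ • pb i) (θ • pb j) by
        rw [hb₀r, hb₀r]; rfl]
      rw [hBg, hgθθ, hgθθ]
      simp [Matrix.fromBlocks_apply₂₂, Matrix.add_apply, Matrix.smul_apply,
        Matrix.neg_apply, Matrix.transpose_apply, smul_eq_mul]
      ring
  have hkey : (2:K) • (G₀.map (algebraMap F K)) = Mmᵀ * Dm * Nm := by
    rw [hRHS]
    ext i j
    exact hentry i j
  -- determinant of H lies in F
  have hdetfix : H.det ^ Fintype.card F = H.det := by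
    have h1 : ψ H.det = (H.map ψ).det := RingHom.map_det ψ H
    have h2 : H.map ψ = H.map (fun a => a ^ Fintype.card F) := by
      ext i j
      exact hψ _
    have h3 : (H.map (fun a => a ^ Fintype.card F)).det = H.det := by
      conv_rhs => rw [← hHerm]
      rw [Matrix.det_transpose]
    rw [hψ] at h1
    rw [h1, h2, h3]
  obtain ⟨d₀, hd₀⟩ := hfix H.det hdetfix
  have hdetH0 : H.det ≠ 0 := by
    have := (Matrix.isUnit_iff_isUnit_det H).mp hH
    exact this.ne_zero
  have hd₀0 : d₀ ≠ 0 := by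
    intro h0
    rw [h0, map_zero] at hd₀
    exact hdetH0 hd₀.symm
  -- block determinants
  have hWdetM : Mm.det = (-(2*θ))^m := by
    rw [hMmdef, Matrix.det_fromBlocks_one₁₁]
    have h4 : (-θ • 1 : Matrix (Fin m) (Fin m) K) - 1 * (θ • 1) = (-(2*θ)) • 1 := by
      rw [Matrix.one_mul, ← sub_smul]
      congr 1
      ring
    rw [h4, Matrix.det_smul, Matrix.det_one, mul_one, Fintype.card_fin]
  have hWdetN : Nm.det = (2*θ)^m := by
    rw [hNmdef, Matrix.det_fromBlocks_one₁₁]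
    have h4 : (θ • 1 : Matrix (Fin m) (Fin m) K) - 1 * (-θ • 1) = (2*θ) • 1 := by
      rw [Matrix.one_mul, ← sub_smul]
      congr 1
      ring
    rw [h4, Matrix.det_smul, Matrix.det_one, mul_one, Fintype.card_fin]
  have hDdet : Dm.det = H.det * H.det := by
    rw [hDmdef, Matrix.det_fromBlocks_zero₁₂, Matrix.det_transpose]
  -- take determinants in hkey
  have hdetkey := congrArg Matrix.det hkey
  rw [Matrix.det_smul, Matrix.det_mul, Matrix.det_mul, Matrix.det_transpose, hWdetM, hWdetN,
    hDdet] at hdetkey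
  rw [show G₀.map (algebraMap F K) = (algebraMap F K).mapMatrix G₀ from rfl,
    ← RingHom.map_det (algebraMap F K) G₀] at hdetkey
  have hcardsum : Fintype.card (Fin m ⊕ Fin m) = m + m := by simp
  rw [hcardsum] at hdetkey
  have hG₀det : G₀.det = (-ζ)^m * d₀^2 := by
    apply halg_inj
    have h2pow : (2:K)^(m+m) ≠ 0 := pow_ne_zero _ h2K
    apply mul_left_cancel₀ h2pow
    rw [hdetkey, _root_.map_mul, map_pow, map_neg, map_pow, ← hd₀, ← hθ2]
    have e4 : ((-2:K))^m * (2:K)^m = (-1:K)^m * (2:K)^(m*2) := by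
      rw [← neg_one_mul (2:K), mul_pow, pow_mul]
      ring
    linear_combination (θ ^ (m * 2) * (algebraMap F K) d₀ ^ 2) * e4
  -- change of basis
  set e3 : (Fin m ⊕ Fin m) ≃ Fin (2*m) := finSumFinEquiv.trans (finCongr (by omega)) with he3def
  set b₁ : Module.Basis (Fin (2*m)) F (Fin m → K) := b₀.reindex e3 with hb₁def
  have hG₁det : (LinearMap.BilinForm.toMatrix b₁ Bform).det = G₀.det := by
    have hG₁ : LinearMap.BilinForm.toMatrix b₁ Bform = (Matrix.reindex e3 e3) G₀ := by
      ext i j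
      rw [BilinForm.toMatrix_apply]
      simp only [hb₁def, Module.Basis.reindex_apply, Matrix.reindex_apply, Matrix.submatrix_apply,
        hG₀def, BilinForm.toMatrix_apply]
    rw [hG₁, Matrix.det_reindex_self]
  have hGram := BilinForm.toMatrix_mul_basis_toMatrix b₁ b Bform
  have hGeq : (Matrix.of fun i j => B (b i) (b j)) = LinearMap.BilinForm.toMatrix b Bform := by
    ext i j
    rw [BilinForm.toMatrix_apply]
    rfl
  have hPdet : (b₁.toMatrix b).det ≠ 0 := by
    have hone := Module.Basis.toMatrix_mul_toMatrix_flip b₁ b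
    intro h0
    have h5 := congrArg Matrix.det hone
    rw [Matrix.det_mul, h0, zero_mul, Matrix.det_one] at h5
    exact zero_ne_one h5
  refine ⟨(b₁.toMatrix b).det * d₀, mul_ne_zero hPdet hd₀0, ?_⟩
  rw [hGeq, ← hGram, Matrix.det_mul, Matrix.det_mul, Matrix.det_transpose, hG₁det, hG₀det]
  ring
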